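/- Let a ≠ 0 and b ∈ ℝ, and define m(n) = logit(Φ(−|a·√n + b|)) for n > 0, where Φ is the standard normal CDF and logit(x) = log(x) − log(1−x). Then there exists N such that m is differentiable on (N, ∞), and lim_{n→∞} m′(n) = −a²/2. -/

import Mathlib

open Filter MeasureTheory Set

/-- Standard normal CDF. -/
noncomputable def Phi (x : ℝ) : ℝ :=
  ∫ t in Set.Iio x, (Real.sqrt (2 * Real.pi))⁻¹ * Real.exp (-t ^ 2 / 2)

/-- Standard normal density. -/
noncomputable def stdPdf (x : ℝ) : ℝ := (Real.sqrt (2 * Real.pi))⁻¹ * Real.exp (-x ^ 2 / 2)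

/-- Standard normal quantile function. -/
noncomputable def PhiInv : ℝ → ℝ := Function.invFun Phi

/-- Logit function. -/
noncomputable def logit (x : ℝ) : ℝ := Real.log x - Real.log (1 - x)

lemma stdPdf_pos (x : ℝ) : 0 < stdPdf x := by
  have : 0 < Real.sqrt (2 * Real.pi) := Real.sqrt_pos.2 (by positivity)
  exact mul_pos (inv_pos.2 this) (Real.exp_pos _)

lemma stdPdf_neg (x : ℝ) : stdPdf (-x) = stdPdf x := by simp [stdPdf]

lemma stdPdf_cont : Continuous stdPdf := by
  unfold stdPdf; fun_prop

lemma stdPdf_integrable : Integrable stdPdf := by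
  have h : Integrable (fun x : ℝ => Real.exp (-(1/2 : ℝ) * x ^ 2)) :=
    integrable_exp_neg_mul_sq (by norm_num)
  have := h.const_mul (Real.sqrt (2 * Real.pi))⁻¹
  refine this.congr (Filter.Eventually.of_forall fun x => ?_)
  simp only [stdPdf]; ring_nf

lemma integral_stdPdf : ∫ x, stdPdf x = 1 := by
  have h : ∫ x : ℝ, Real.exp (-(1/2 : ℝ) * x ^ 2) = Real.sqrt (Real.pi / (1/2)) :=
    integral_gaussian (1/2)
  have h2 : ∫ x, stdPdf x = (Real.sqrt (2 * Real.pi))⁻¹ * ∫ x : ℝ, Real.exp (-(1/2 : ℝ) * x ^ 2) := by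
    rw [← integral_const_mul]
    congr 1 with x
    simp only [stdPdf]; ring_nf
  rw [h2, h]
  have : Real.pi / (1/2) = 2 * Real.pi := by ring
  rw [this, inv_mul_cancel₀ (ne_of_gt (Real.sqrt_pos.2 (by positivity)))]

lemma Phi_eq (x : ℝ) : Phi x = Phi 0 + ∫ t in (0:ℝ)..x, stdPdf t := by
  have hi : ∀ y : ℝ, IntegrableOn stdPdf (Iic y) := fun y => stdPdf_integrable.integrableOn
  have h := intervalIntegral.integral_Iic_sub_Iic (f := stdPdf) (μ := volume) (hi 0) (hi x)
  have e1 : Phi x = ∫ t in Iic x, stdPdf t := by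
    rw [MeasureTheory.integral_Iic_eq_integral_Iio]; rfl
  have e2 : Phi 0 = ∫ t in Iic (0:ℝ), stdPdf t := by
    rw [MeasureTheory.integral_Iic_eq_integral_Iio]; rfl
  rw [e1, e2]; linarith

lemma hasDerivAt_Phi (x : ℝ) : HasDerivAt Phi (stdPdf x) x := by
  have h1 : HasDerivAt (fun y : ℝ => Phi 0 + ∫ t in (0:ℝ)..y, stdPdf t) (stdPdf x) x := by
    refine HasDerivAt.const_add _ ?_
    exact (intervalIntegral.integral_hasStrictDerivAt_right
      (stdPdf_integrable.intervalIntegrable)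
      (stdPdf_cont.stronglyMeasurableAtFilter _ _) stdPdf_cont.continuousAt).hasDerivAt
  exact h1.congr_of_eventuallyEq (Filter.Eventually.of_forall fun y => (Phi_eq y))

lemma Phi_pos (x : ℝ) : 0 < Phi x := by
  rw [show Phi x = ∫ t in Iio x, stdPdf t from rfl]
  rw [MeasureTheory.setIntegral_pos_iff_support_of_nonneg_ae
    (Filter.Eventually.of_forall fun t => (stdPdf_pos t).le) stdPdf_integrable.integrableOn]
  have hs : Function.support stdPdf = univ := by
    ext t; simp [Function.mem_support, (stdPdf_pos t).ne']
  rw [hs, univ_inter, Real.volume_Iio]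
  simp

lemma Phi_lt_one (x : ℝ) : Phi x < 1 := by
  have h := intervalIntegral.integral_Iio_add_Ici (f := stdPdf) (μ := volume) (b := x)
    stdPdf_integrable.integrableOn stdPdf_integrable.integrableOn
  have hpos : 0 < ∫ t in Ici x, stdPdf t := by
    rw [MeasureTheory.setIntegral_pos_iff_support_of_nonneg_ae
      (Filter.Eventually.of_forall fun t => (stdPdf_pos t).le) stdPdf_integrable.integrableOn]
    have hs : Function.support stdPdf = univ := by
      ext t; simp [Function.mem_support, (stdPdf_pos t).ne']
    rw [hs, univ_inter, Real.volume_Ici]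
    simp
  have : Phi x + ∫ t in Ici x, stdPdf t = 1 := by
    rw [show Phi x = ∫ t in Iio x, stdPdf t from rfl, h, integral_stdPdf]
  linarith

lemma tendsto_Phi_atBot : Tendsto Phi atBot (nhds 0) := by
  have h : ∀ y : ℝ, Phi y = ∫ x, (Iio y).indicator stdPdf x := by
    intro y
    rw [MeasureTheory.integral_indicator measurableSet_Iio]; rfl
  rw [show (0:ℝ) = ∫ x : ℝ, (0:ℝ) by simp]
  refine Tendsto.congr (fun y => (h y).symm) ?_
  refine MeasureTheory.tendsto_integral_filter_of_dominated_convergence stdPdf ?_ ?_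
    stdPdf_integrable ?_
  · exact Filter.Eventually.of_forall fun y =>
      (stdPdf_cont.aestronglyMeasurable).indicator measurableSet_Iio
  · refine Filter.Eventually.of_forall fun y => Filter.Eventually.of_forall fun x => ?_
    by_cases hx : x ∈ Iio y
    · rw [indicator_of_mem hx]; rw [Real.norm_of_nonneg (stdPdf_pos x).le]
    · rw [indicator_of_notMem hx]; simp [(stdPdf_pos x).le]
  · refine Filter.Eventually.of_forall fun x => ?_
    refine Tendsto.congr' ?_ tendsto_const_nhds
    filter_upwards [eventually_le_atBot x] with y hy
    exact (indicator_of_notMem (by simp [mem_Iio]; exact hy) _).symm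

lemma hasDerivAt_stdPdf (x : ℝ) : HasDerivAt stdPdf (-x * stdPdf x) x := by
  have h1 : HasDerivAt (fun t : ℝ => -t ^ 2 / 2) (-x) x := by
    have := ((hasDerivAt_pow 2 x).neg.div_const 2)
    refine this.congr_deriv ?_; simp; ring
  have h2 := (h1.exp).const_mul (Real.sqrt (2 * Real.pi))⁻¹
  refine h2.congr_deriv ?_
  simp only [stdPdf]; ring

lemma tendsto_stdPdf_atTop : Tendsto stdPdf atTop (nhds 0) := by
  have h1 : Tendsto (fun x : ℝ => -x ^ 2 / 2) atTop atBot := by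
    apply Filter.Tendsto.atBot_div_const (by norm_num : (0:ℝ) < 2)
    exact tendsto_neg_atTop_atBot.comp (tendsto_pow_atTop two_ne_zero)
  have h2 : Tendsto (fun x : ℝ => Real.exp (-x ^ 2 / 2)) atTop (nhds 0) :=
    Real.tendsto_exp_atBot.comp h1
  have h3 := h2.const_mul (Real.sqrt (2 * Real.pi))⁻¹
  rw [mul_zero] at h3
  exact h3

lemma tendsto_sqrt_atTop : Tendsto Real.sqrt atTop atTop := by
  refine tendsto_atTop_atTop.2 fun C => ⟨C ^ 2 + 1, fun n hn => ?_⟩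
  have h0 : (0:ℝ) ≤ n := le_trans (by positivity) hn
  nlinarith [Real.sq_sqrt h0, Real.sqrt_nonneg n, sq_nonneg (Real.sqrt n - C), sq_nonneg C]

lemma tendsto_Phi_neg_atTop : Tendsto (fun x => Phi (-x)) atTop (nhds 0) :=
  tendsto_Phi_atBot.comp tendsto_neg_atTop_atBot

lemma mills : Tendsto (fun x => Phi (-x) / (stdPdf x / x)) atTop (nhds 1) := by
  have hff' : ∀ᶠ x : ℝ in atTop, HasDerivAt (fun y => Phi (-y)) (-stdPdf x) x := by
    refine Filter.Eventually.of_forall fun x => ?_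
    have := (hasDerivAt_Phi (-x)).comp x (hasDerivAt_neg x)
    simpa [stdPdf_neg, Function.comp_def] using this
  have hgg' : ∀ᶠ x : ℝ in atTop,
      HasDerivAt (fun y => stdPdf y / y) ((-x * stdPdf x * x - stdPdf x * 1) / x ^ 2) x := by
    filter_upwards [eventually_gt_atTop (0:ℝ)] with x hx
    exact (hasDerivAt_stdPdf x).div (hasDerivAt_id x) hx.ne'
  have hg' : ∀ᶠ x : ℝ in atTop, (-x * stdPdf x * x - stdPdf x * 1) / x ^ 2 ≠ 0 := by
    filter_upwards [eventually_gt_atTop (0:ℝ)] with x hx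
    have := stdPdf_pos x
    have hnum : -x * stdPdf x * x - stdPdf x * 1 < 0 := by nlinarith [mul_pos (mul_pos hx this) hx]
    exact div_ne_zero hnum.ne (by positivity)
  have hfbot : Tendsto (fun y => Phi (-y)) atTop (nhds 0) := tendsto_Phi_neg_atTop
  have hgbot : Tendsto (fun y => stdPdf y / y) atTop (nhds 0) := by
    have h1 : Tendsto (fun y : ℝ => stdPdf y * y⁻¹) atTop (nhds (0 * 0)) :=
      tendsto_stdPdf_atTop.mul tendsto_inv_atTop_zero
    simpa [div_eq_mul_inv] using h1
  have hdiv : Tendsto (fun x => (-stdPdf x) / ((-x * stdPdf x * x - stdPdf x * 1) / x ^ 2))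
      atTop (nhds 1) := by
    have key : Tendsto (fun x : ℝ => 1 - (x ^ 2 + 1)⁻¹) atTop (nhds 1) := by
      have : Tendsto (fun x : ℝ => (x ^ 2 + 1)⁻¹) atTop (nhds 0) :=
        tendsto_inv_atTop_zero.comp ((tendsto_pow_atTop two_ne_zero).atTop_add tendsto_const_nhds)
      simpa using tendsto_const_nhds.sub this
    refine Tendsto.congr' ?_ key
    filter_upwards [eventually_gt_atTop (0:ℝ)] with x hx
    have hs := (stdPdf_pos x).ne'
    have hx2 : (x:ℝ) ^ 2 + 1 ≠ 0 := by positivity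
    have he : -stdPdf x / ((-x * stdPdf x * x - stdPdf x * 1) / x ^ 2) = x ^ 2 / (x ^ 2 + 1) := by
      rw [div_div_eq_mul_div,
        show -x * stdPdf x * x - stdPdf x * 1 = -stdPdf x * (x ^ 2 + 1) by ring,
        show -stdPdf x * x ^ 2 = -stdPdf x * x ^ 2 from rfl,
        mul_div_mul_left _ _ (neg_ne_zero.2 hs)]
    rw [he]
    field_simp
    ring
  exact HasDerivAt.lhopital_zero_atTop hff' hgg' hg' hfbot hgbot hdiv

lemma hazard : Tendsto (fun x => stdPdf x / (x * Phi (-x))) atTop (nhds 1) := by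
  have h := mills.inv₀ one_ne_zero
  rw [inv_one] at h
  refine Tendsto.congr' ?_ h
  filter_upwards [eventually_gt_atTop (0:ℝ)] with x hx
  rw [inv_div, div_div]

theorem stmt5 (a b : ℝ) (ha : a ≠ 0) :
    ∃ N : ℝ,
      DifferentiableOn ℝ (fun n : ℝ => logit (Phi (-|a * Real.sqrt n + b|))) (Set.Ioi N) ∧
      Filter.Tendsto (deriv (fun n : ℝ => logit (Phi (-|a * Real.sqrt n + b|))))
        Filter.atTop (nhds (-a ^ 2 / 2)) := by
  have habs : 0 < |a| := abs_pos.2 ha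
  set c : ℝ := if 0 < a then b else -b with hcdef
  set N : ℝ := ((|b| + 1) / |a|) ^ 2 with hNdef
  set h : ℝ → ℝ := fun n => |a| * Real.sqrt n + c with hhdef
  have hN0 : 0 < N := by positivity
  -- basic facts on Ioi N
  have hkey : ∀ n ∈ Ioi N, 0 < n ∧ 1 < h n ∧ |a * Real.sqrt n + b| = h n := by
    intro n hn
    rw [mem_Ioi] at hn
    have hn0 : 0 < n := lt_trans hN0 hn
    have hsqrt : (|b| + 1) / |a| < Real.sqrt n := by
      have := Real.sqrt_lt_sqrt hN0.le hn
      rwa [Real.sqrt_sq (by positivity)] at this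
    have hgt : |b| + 1 < |a| * Real.sqrt n := by
      rw [div_lt_iff₀ habs] at hsqrt
      linarith [hsqrt]
    have hcabs : |c| = |b| := by
      simp only [hcdef]; split <;> simp [abs_neg]
    have hch : 1 < h n := by
      have : -|b| ≤ c := by
        have := abs_le.1 (le_of_eq hcabs)
        linarith [neg_abs_le c, hcabs, abs_nonneg c, (neg_abs_le c)]
      simp only [hhdef]
      nlinarith [neg_abs_le c, hcabs]
    refine ⟨hn0, hch, ?_⟩
    rcases lt_or_gt_of_ne ha with haneg | hapos
    · have hc' : c = -b := by simp [hcdef, not_lt.2 haneg.le, haneg.not_gt]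
      have : a * Real.sqrt n + b = -(h n) := by
        simp only [hhdef, hc', abs_of_neg haneg]; ring
      rw [this, abs_neg, abs_of_pos (lt_trans one_pos hch)]
    · have hc' : c = b := by simp [hcdef, hapos]
      have : a * Real.sqrt n + b = h n := by
        simp only [hhdef, hc', abs_of_pos hapos]
      rw [this, abs_of_pos (lt_trans one_pos hch)]
  -- the derivative formula
  set D : ℝ → ℝ := fun n =>
    stdPdf (h n) * -(|a| * (1 / (2 * Real.sqrt n))) / Phi (-h n) +
      stdPdf (h n) * -(|a| * (1 / (2 * Real.sqrt n))) / (1 - Phi (-h n)) with hDdef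
  have hm : ∀ n ∈ Ioi N, HasDerivAt
      (fun n : ℝ => logit (Phi (-|a * Real.sqrt n + b|))) (D n) n := by
    intro n hn
    obtain ⟨hn0, hh1, _⟩ := hkey n hn
    have hhn : HasDerivAt h (|a| * (1 / (2 * Real.sqrt n))) n :=
      ((Real.hasDerivAt_sqrt hn0.ne').const_mul |a|).add_const c
    have hP : HasDerivAt (fun n => Phi (-h n))
        (stdPdf (h n) * -(|a| * (1 / (2 * Real.sqrt n)))) n := by
      have := (hasDerivAt_Phi (-h n)).comp n hhn.neg
      simpa [stdPdf_neg, mul_comm, Function.comp_def] using this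
    have hPpos : 0 < Phi (-h n) := Phi_pos _
    have hPlt : Phi (-h n) < 1 := Phi_lt_one _
    have hM : HasDerivAt (fun n : ℝ => Real.log (Phi (-h n)) - Real.log (1 - Phi (-h n)))
        (D n) n := by
      have h1 := hP.log hPpos.ne'
      have h2 := ((hasDerivAt_const n (1:ℝ)).sub hP).log (by linarith : (1:ℝ) - Phi (-h n) ≠ 0)
      have := h1.sub h2
      refine this.congr_deriv ?_
      simp only [hDdef, Pi.sub_apply]
      field_simp
      ring
    refine hM.congr_of_eventuallyEq ?_
    filter_upwards [Ioi_mem_nhds (mem_Ioi.1 hn)] with y hy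
    obtain ⟨_, _, habsy⟩ := hkey y hy
    rw [habsy]; rfl
  -- tendsto of D
  have htendh : Tendsto h atTop atTop := by
    apply tendsto_atTop_add_const_right
    exact (tendsto_sqrt_atTop.const_mul_atTop habs)
  have hsq2 : Tendsto (fun n : ℝ => (2 * Real.sqrt n)⁻¹) atTop (nhds 0) :=
    tendsto_inv_atTop_zero.comp (tendsto_sqrt_atTop.const_mul_atTop two_pos)
  have hBtend : Tendsto (fun n => h n * (|a| * (1 / (2 * Real.sqrt n)))) atTop
      (nhds (a ^ 2 / 2)) := by
    have key : Tendsto (fun n : ℝ => a ^ 2 / 2 + c * |a| * (2 * Real.sqrt n)⁻¹) atTop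
        (nhds (a ^ 2 / 2)) := by
      have := hsq2.const_mul (c * |a|)
      rw [mul_zero] at this
      simpa using tendsto_const_nhds.add this
    refine Tendsto.congr' ?_ key
    filter_upwards [eventually_gt_atTop (0:ℝ)] with n hn
    have hs : 0 < Real.sqrt n := Real.sqrt_pos.2 hn
    simp only [hhdef]
    field_simp
    linear_combination (-Real.sqrt n) * sq_abs a
  have hAtend : Tendsto (fun n => stdPdf (h n) / (h n * Phi (-h n))) atTop (nhds 1) :=
    hazard.comp htendh
  have hT1 : Tendsto (fun n => stdPdf (h n) * -(|a| * (1 / (2 * Real.sqrt n))) / Phi (-h n))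
      atTop (nhds (-(a ^ 2 / 2))) := by
    have key := (hAtend.mul hBtend).neg
    rw [one_mul] at key
    refine Tendsto.congr' ?_ key
    filter_upwards [eventually_gt_atTop N] with n hn
    obtain ⟨hn0, hh1, _⟩ := hkey n (mem_Ioi.2 hn)
    have hs : 0 < Real.sqrt n := Real.sqrt_pos.2 hn0
    have hPpos : 0 < Phi (-h n) := Phi_pos _
    have hhpos : 0 < h n := lt_trans one_pos hh1
    field_simp
  have hT2 : Tendsto (fun n => stdPdf (h n) * -(|a| * (1 / (2 * Real.sqrt n))) / (1 - Phi (-h n)))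
      atTop (nhds 0) := by
    have hnum : Tendsto (fun n => stdPdf (h n) * -(|a| * (1 / (2 * Real.sqrt n)))) atTop
        (nhds 0) := by
      have h1 : Tendsto (fun n => stdPdf (h n)) atTop (nhds 0) :=
        tendsto_stdPdf_atTop.comp htendh
      have h2 : Tendsto (fun n : ℝ => -(|a| * (1 / (2 * Real.sqrt n)))) atTop (nhds 0) := by
        have := (hsq2.const_mul |a|).neg
        simp only [mul_zero, neg_zero] at this
        refine this.congr fun n => by rw [one_div]
      have := h1.mul h2
      rwa [mul_zero] at this
    have hden : Tendsto (fun n => 1 - Phi (-h n)) atTop (nhds 1) := by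
      have := (tendsto_const_nhds : Tendsto (fun _ : ℝ => (1:ℝ)) atTop (nhds 1)).sub
        (tendsto_Phi_neg_atTop.comp htendh)
      simpa using this
    have := hnum.div hden one_ne_zero
    simpa [Pi.div_def] using this
  have hDtend : Tendsto D atTop (nhds (-a ^ 2 / 2)) := by
    have := hT1.add hT2
    rw [add_zero] at this
    convert this using 2
    ring
  refine ⟨N, fun n hn => (hm n hn).differentiableAt.differentiableWithinAt, ?_⟩
  refine Tendsto.congr' ?_ hDtend
  filter_upwards [eventually_gt_atTop N] with n hn
  exact ((hm n (mem_Ioi.2 hn)).deriv).symm
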